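/- Twisted multiplicativity of Kloosterman sums: let m and n be coprime positive integers, and let n̄ be an inverse of n mod m and m̄ an inverse of m mod n. Then for all integers a, b, S(a, b; mn) = S(a n̄, b n̄; m) · S(a m̄, b m̄; n). -/

import Mathlib

open scoped Real BigOperators

noncomputable def e (x : ℝ) : ℂ := Complex.exp (2 * Real.pi * Complex.I * x)

noncomputable def KS (a b : ℤ) (c : ℕ) : ℂ :=
  ∑ x ∈ (Finset.range c).filter (fun x => Nat.Coprime x c),
    e ((((a * (x : ℤ) + b * ((((x : ℕ) : ZMod c)⁻¹).val : ℤ)) : ℤ) : ℝ) / (c : ℝ))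

lemma e_add (x y : ℝ) : e (x + y) = e x * e y := by
  rw [e, e, e, ← Complex.exp_add]
  congr 1
  push_cast
  ring

lemma e_int (k : ℤ) : e k = 1 := by
  rw [e, ← Complex.exp_int_mul_two_pi_mul_I k]
  congr 1
  push_cast
  ring

lemma e_int_add (x : ℝ) (k : ℤ) : e (x + k) = e x := by
  rw [e_add, e_int, mul_one]

lemma e_congr (c : ℕ) (hc : c ≠ 0) {s t : ℤ} (h : s ≡ t [ZMOD (c : ℤ)]) :
    e ((s : ℝ) / c) = e ((t : ℝ) / c) := by
  obtain ⟨k, hk⟩ := h.dvd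
  have hcR : (c : ℝ) ≠ 0 := Nat.cast_ne_zero.mpr hc
  have : (t : ℝ) / c = (s : ℝ) / c + k := by
    have : (t : ℝ) = s + c * k := by exact_mod_cast congrArg (Int.cast : ℤ → ℝ) (by linarith [hk] : t = s + c * k)
    rw [this]; field_simp
  rw [this, e_int_add]

lemma KS_eq_sum_units (a b : ℤ) (c : ℕ) [NeZero c] :
    KS a b c = ∑ u : (ZMod c)ˣ,
      e (((a * ((u : ZMod c).val : ℤ) + b * (((u⁻¹ : (ZMod c)ˣ) : ZMod c).val : ℤ) : ℤ) : ℝ) / c) := by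
  rw [KS]
  refine Finset.sum_bij' (fun x hx => ZMod.unitOfCoprime x (Finset.mem_filter.mp hx).2)
    (fun u _ => (u : ZMod c).val) (fun _ _ => Finset.mem_univ _)
    (fun u _ => Finset.mem_filter.mpr ⟨Finset.mem_range.mpr (ZMod.val_lt (u : ZMod c)), ZMod.val_coe_unit_coprime u⟩)
    (fun x hx => ?_) (fun u _ => ?_) (fun x hx => ?_)
  · rw [ZMod.coe_unitOfCoprime, ZMod.val_cast_of_lt (Finset.mem_range.mp (Finset.mem_filter.mp hx).1)]
  · exact Units.ext (by simp only [ZMod.coe_unitOfCoprime, ZMod.natCast_zmod_val])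
  · rw [← ZMod.inv_coe_unit, ZMod.coe_unitOfCoprime,
      ZMod.val_cast_of_lt (Finset.mem_range.mp (Finset.mem_filter.mp hx).1)]

noncomputable def crtUnits (m n : ℕ) (hcop : Nat.Coprime m n) :
    (ZMod (m * n))ˣ ≃* (ZMod m)ˣ × (ZMod n)ˣ :=
  (Units.mapEquiv (ZMod.chineseRemainder hcop).toMulEquiv).trans MulEquiv.prodUnits

lemma crt_fst (m n : ℕ) (hcop : Nat.Coprime m n) (x : ZMod (m * n)) :
    (ZMod.chineseRemainder hcop x).1 = ZMod.castHom (dvd_mul_right m n) (ZMod m) x := by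
  have h : (RingHom.fst (ZMod m) (ZMod n)).comp (ZMod.chineseRemainder hcop).toRingHom
      = ZMod.castHom (dvd_mul_right m n) (ZMod m) := RingHom.ext_zmod _ _
  exact RingHom.congr_fun h x

lemma crt_snd (m n : ℕ) (hcop : Nat.Coprime m n) (x : ZMod (m * n)) :
    (ZMod.chineseRemainder hcop x).2 = ZMod.castHom (dvd_mul_left n m) (ZMod n) x := by
  have h : (RingHom.snd (ZMod m) (ZMod n)).comp (ZMod.chineseRemainder hcop).toRingHom
      = ZMod.castHom (dvd_mul_left n m) (ZMod n) := RingHom.ext_zmod _ _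
  exact RingHom.congr_fun h x

lemma crtUnits_fst_coe (m n : ℕ) (hcop : Nat.Coprime m n) (u : (ZMod (m * n))ˣ) :
    ((crtUnits m n hcop u).1 : ZMod m)
      = ZMod.castHom (dvd_mul_right m n) (ZMod m) (u : ZMod (m * n)) := by
  rw [← crt_fst m n hcop]; rfl

lemma crtUnits_snd_coe (m n : ℕ) (hcop : Nat.Coprime m n) (u : (ZMod (m * n))ˣ) :
    ((crtUnits m n hcop u).2 : ZMod n)
      = ZMod.castHom (dvd_mul_left n m) (ZMod n) (u : ZMod (m * n)) := by
  rw [← crt_snd m n hcop]; rfl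

lemma val_congr_fst (m n : ℕ) [NeZero m] [NeZero n] (hcop : Nat.Coprime m n)
    (u : (ZMod (m * n))ˣ) :
    (((u : ZMod (m * n)).val : ℤ)) ≡ ((((crtUnits m n hcop u).1 : ZMod m)).val : ℤ)
      [ZMOD (m : ℤ)] := by
  haveI : NeZero (m * n) := ⟨Nat.mul_ne_zero (NeZero.ne m) (NeZero.ne n)⟩
  rw [← ZMod.intCast_eq_intCast_iff]
  push_cast
  rw [ZMod.natCast_val, ZMod.natCast_val, crtUnits_fst_coe, ZMod.castHom_apply]
  simp [ZMod.cast_id]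

lemma val_congr_snd (m n : ℕ) [NeZero m] [NeZero n] (hcop : Nat.Coprime m n)
    (u : (ZMod (m * n))ˣ) :
    (((u : ZMod (m * n)).val : ℤ)) ≡ ((((crtUnits m n hcop u).2 : ZMod n)).val : ℤ)
      [ZMOD (n : ℤ)] := by
  haveI : NeZero (m * n) := ⟨Nat.mul_ne_zero (NeZero.ne m) (NeZero.ne n)⟩
  rw [← ZMod.intCast_eq_intCast_iff]
  push_cast
  rw [ZMod.natCast_val, ZMod.natCast_val, crtUnits_snd_coe, ZMod.castHom_apply]
  simp [ZMod.cast_id]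

/-- Twisted multiplicativity of Kloosterman sums: for `m, n` coprime positive integers,
`n̄ n ≡ 1 (mod m)`, `m̄ m ≡ 1 (mod n)`, and all integers `a, b`,
`S(a, b; mn) = S(a n̄, b n̄; m) · S(a m̄, b m̄; n)`. -/
theorem kloosterman_twisted_multiplicativity (m n : ℕ) (hm : 0 < m) (hn : 0 < n)
    (hcop : Nat.Coprime m n) (nbar mbar : ℤ)
    (hnbar : nbar * (n : ℤ) ≡ 1 [ZMOD (m : ℤ)]) (hmbar : mbar * (m : ℤ) ≡ 1 [ZMOD (n : ℤ)])
    (a b : ℤ) :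
    KS a b (m * n) = KS (a * nbar) (b * nbar) m * KS (a * mbar) (b * mbar) n := by
  haveI : NeZero m := ⟨hm.ne'⟩
  haveI : NeZero n := ⟨hn.ne'⟩
  haveI : NeZero (m * n) := ⟨Nat.mul_ne_zero hm.ne' hn.ne'⟩
  -- find k with nbar*n + mbar*m = 1 + (m*n)*k
  have hdm : (m : ℤ) ∣ (nbar * n + mbar * m - 1) := by
    have h0 : (nbar * n + mbar * m - 1) ≡ (1 + 0 - 1) [ZMOD (m : ℤ)] :=
      (hnbar.add (Int.modEq_zero_iff_dvd.mpr ⟨mbar, mul_comm mbar m⟩)).sub Int.ModEq.rfl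
    simpa using (Int.modEq_zero_iff_dvd.mp (by simpa using h0))
  have hdn : (n : ℤ) ∣ (nbar * n + mbar * m - 1) := by
    have h0 : (nbar * n + mbar * m - 1) ≡ (0 + 1 - 1) [ZMOD (n : ℤ)] :=
      ((Int.modEq_zero_iff_dvd.mpr ⟨nbar, mul_comm nbar n⟩).add hmbar).sub Int.ModEq.rfl
    simpa using (Int.modEq_zero_iff_dvd.mp (by simpa using h0))
  have hcopZ : IsCoprime (m : ℤ) (n : ℤ) := Nat.isCoprime_iff_coprime.mpr hcop
  obtain ⟨k, hk⟩ : ((m : ℤ) * n) ∣ (nbar * n + mbar * m - 1) := hcopZ.mul_dvd hdm hdn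
  rw [KS_eq_sum_units a b (m * n), KS_eq_sum_units (a * nbar) (b * nbar) m,
    KS_eq_sum_units (a * mbar) (b * mbar) n, Finset.sum_mul_sum, ← Fintype.sum_prod_type']
  refine Fintype.sum_equiv (crtUnits m n hcop).toEquiv _ _ (fun u => ?_)
  simp only [MulEquiv.toEquiv_eq_coe, EquivLike.coe_coe]
  set y := (crtUnits m n hcop u).1 with hy
  set z := (crtUnits m n hcop u).2 with hz
  set X : ℤ := ((u : ZMod (m * n)).val : ℤ) with hX
  set Xi : ℤ := (((u⁻¹ : (ZMod (m * n))ˣ) : ZMod (m * n)).val : ℤ) with hXi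
  set Y : ℤ := ((y : ZMod m).val : ℤ) with hY
  set Yi : ℤ := (((y⁻¹ : (ZMod m)ˣ) : ZMod m).val : ℤ) with hYi
  set Z : ℤ := ((z : ZMod n).val : ℤ) with hZ
  set Zi : ℤ := (((z⁻¹ : (ZMod n)ˣ) : ZMod n).val : ℤ) with hZi
  have hXY : X ≡ Y [ZMOD (m : ℤ)] := val_congr_fst m n hcop u
  have hXZ : X ≡ Z [ZMOD (n : ℤ)] := val_congr_snd m n hcop u
  have hXiYi : Xi ≡ Yi [ZMOD (m : ℤ)] := by
    have h := val_congr_fst m n hcop u⁻¹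
    rwa [map_inv] at h
  have hXiZi : Xi ≡ Zi [ZMOD (n : ℤ)] := by
    have h := val_congr_snd m n hcop u⁻¹
    rwa [map_inv] at h
  have hmR : (m : ℝ) ≠ 0 := Nat.cast_ne_zero.mpr hm.ne'
  have hnR : (n : ℝ) ≠ 0 := Nat.cast_ne_zero.mpr hn.ne'
  set t : ℤ := a * X + b * Xi with ht
  have hkR : (nbar : ℝ) * n + mbar * m - 1 = (m * n) * k := by exact_mod_cast congrArg (Int.cast : ℤ → ℝ) hk
  have hsplit : ((t : ℝ)) / ((m * n : ℕ) : ℝ)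
      = ((t * nbar : ℤ) : ℝ) / m + (((t * mbar : ℤ) : ℝ) / n + ((-(t * k) : ℤ) : ℝ)) := by
    push_cast
    field_simp
    linear_combination (-((t : ℤ) : ℝ)) * hkR
  rw [hsplit, e_add, e_add, e_int, mul_one]
  congr 1
  · apply e_congr m hm.ne'
    calc t * nbar ≡ (a * Y + b * Yi) * nbar [ZMOD (m:ℤ)] :=
          ((hXY.mul_left a).add (hXiYi.mul_left b)).mul_right nbar
      _ = a * nbar * Y + b * nbar * Yi := by ring
  · apply e_congr n hn.ne'
    calc t * mbar ≡ (a * Z + b * Zi) * mbar [ZMOD (n:ℤ)] :=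
          ((hXZ.mul_left a).add (hXiZi.mul_left b)).mul_right mbar
      _ = a * mbar * Z + b * mbar * Zi := by ring
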